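/- Let Γ and Δ be finitely generated groups whose profinite completions are isomorphic as topological groups. Then the abelianizations of Γ and Δ are isomorphic. -/

import Mathlib

/-- The index type of finite-index normal subgroups of `G`. -/
def FinIndexNormalSubgroup (G : Type*) [Group G] :=
  {N : Subgroup G // N.Normal ∧ N.FiniteIndex}

instance {G : Type*} [Group G] (N : FinIndexNormalSubgroup G) : N.1.Normal := N.2.1
instance {G : Type*} [Group G] (N : FinIndexNormalSubgroup G) : N.1.FiniteIndex := N.2.2

/-- Each finite quotient carries the discrete topology. -/
instance {G : Type*} [Group G] (N : FinIndexNormalSubgroup G) :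
    TopologicalSpace (G ⧸ N.1) := ⊥

/-- The profinite completion of `G`, realized as the inverse limit of the finite
quotients `G ⧸ N` over all finite-index normal subgroups `N`, sitting inside the
product `∀ N, G ⧸ N` (which carries the product of the discrete topologies). -/
def profiniteCompletion (G : Type*) [Group G] :
    Subgroup (∀ N : FinIndexNormalSubgroup G, G ⧸ N.1) where
  carrier := {x | ∀ (N M : FinIndexNormalSubgroup G) (h : N.1 ≤ M.1),
    QuotientGroup.map N.1 M.1 (MonoidHom.id G) h (x N) = x M}
  one_mem' := by intro N M h; simp
  mul_mem' := by
    intro x y hx hy N M h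
    simp only [Pi.mul_apply, map_mul, hx N M h, hy N M h]
  inv_mem' := by
    intro x hx N M h
    simp only [Pi.inv_apply, map_inv, hx N M h]

open scoped DirectSum

namespace ProfComp

instance {G : Type*} [Group G] (N : FinIndexNormalSubgroup G) :
    DiscreteTopology (G ⧸ N.1) := ⟨rfl⟩

variable {G : Type*} [Group G]

/-- The diagonal map into the profinite completion. -/
def diag (G : Type*) [Group G] : G →* ↥(profiniteCompletion G) where
  toFun g := ⟨fun N => (g : G ⧸ N.1), fun N M h => by
    rfl⟩
  map_one' := by ext N; simp
  map_mul' g h := by ext N; simp [QuotientGroup.mk_mul]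

@[simp] lemma diag_apply (g : G) (N : FinIndexNormalSubgroup G) :
    (diag G g).1 N = (g : G ⧸ N.1) := rfl

lemma denseRange_diag : DenseRange (diag G) := by
  intro x
  rw [mem_closure_iff]
  intro o ho hxo
  obtain ⟨U, hU, rfl⟩ := isOpen_induced_iff.mp ho
  obtain ⟨I, u, hIu, hpi⟩ := isOpen_pi_iff.mp hU x.1 hxo
  -- the intersection of the subgroups in I
  have hnormal : (⨅ N ∈ I, N.1 : Subgroup G).Normal := by
    constructor
    intro n hn g
    simp only [Subgroup.mem_iInf] at hn ⊢
    intro N hN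
    exact N.2.1.conj_mem n (hn N hN) g
  have hfi : (⨅ N ∈ I, N.1 : Subgroup G).FiniteIndex := by
    rw [iInf_subtype']
    exact Subgroup.finiteIndex_iInf fun N => N.1.2.2
  set M : FinIndexNormalSubgroup G := ⟨⨅ N ∈ I, N.1, hnormal, hfi⟩ with hM
  obtain ⟨g, hg⟩ := QuotientGroup.mk_surjective (x.1 M)
  have key : ∀ N ∈ I, (g : G ⧸ N.1) = x.1 N := by
    intro N hN
    have hle : M.1 ≤ N.1 := by
      simp only [hM]
      exact iInf_le_of_le N (iInf_le _ hN)
    have := x.2 M N hle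
    rw [← hg] at this
    exact this
  refine ⟨diag G g, ?_, ⟨g, rfl⟩⟩
  show (diag G g).1 ∈ U
  apply hpi
  intro N hN
  simpa [key N hN] using (hIu N hN).2

variable {A : Type*} [Group A] [Finite A]

/-- The kernel of a hom to a finite group, as a finite-index normal subgroup. -/
def kerFin (φ : G →* A) : FinIndexNormalSubgroup G :=
  ⟨φ.ker, inferInstance, by
    have : Finite (G ⧸ φ.ker) := Finite.of_injective _ (QuotientGroup.kerLift_injective φ)
    exact Subgroup.finiteIndex_of_finite_quotient⟩

/-- Extension of a hom to a finite group to the profinite completion. -/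
noncomputable def extHom (φ : G →* A) : ↥(profiniteCompletion G) →* A :=
  (QuotientGroup.kerLift φ).comp
    ((Pi.evalMonoidHom (fun N : FinIndexNormalSubgroup G => G ⧸ N.1) (kerFin φ)).comp
      (profiniteCompletion G).subtype)

lemma extHom_diag (φ : G →* A) : (extHom φ).comp (diag G) = φ := by
  ext g
  show QuotientGroup.kerLift φ ((g : G ⧸ (kerFin φ).1)) = φ g
  exact QuotientGroup.kerLift_mk φ g

lemma continuous_extHom [TopologicalSpace A] (φ : G →* A) : Continuous (extHom φ) := by
  have h1 : Continuous fun x : ↥(profiniteCompletion G) => x.1 (kerFin φ) :=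
    (continuous_apply _).comp continuous_subtype_val
  exact (continuous_of_discreteTopology (α := G ⧸ (kerFin φ).1)
    (f := ⇑(QuotientGroup.kerLift φ))).comp h1

omit [Finite A] in
lemma eq_of_comp_diag_eq [TopologicalSpace A] [T2Space A]
    (f g : ↥(profiniteCompletion G) →* A) (hf : Continuous f) (hg : Continuous g)
    (h : f.comp (diag G) = g.comp (diag G)) : f = g := by
  have := DenseRange.equalizer denseRange_diag hf hg (funext fun x => by
    simpa using DFunLike.congr_fun h x)
  ext x; exact congrFun this x

end ProfComp

namespace ProfComp

variable {Γ Δ : Type*} [Group Γ] [Group Δ]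
variable (e : ↥(profiniteCompletion Γ) ≃* ↥(profiniteCompletion Δ))

/-- Transfer homs to a finite discrete group across an isomorphism of profinite completions. -/
noncomputable def homEquivOfIso (he : Continuous e) (he' : Continuous e.symm)
    (A : Type*) [Group A] [Finite A] [TopologicalSpace A] [DiscreteTopology A] :
    (Γ →* A) ≃ (Δ →* A) where
  toFun φ := ((extHom φ).comp e.symm.toMonoidHom).comp (diag Δ)
  invFun ψ := ((extHom ψ).comp e.toMonoidHom).comp (diag Γ)
  left_inv φ := by
    have h1 : extHom (((extHom φ).comp e.symm.toMonoidHom).comp (diag Δ))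
        = (extHom φ).comp e.symm.toMonoidHom :=
      eq_of_comp_diag_eq _ _ (continuous_extHom _) ((continuous_extHom φ).comp he')
        (extHom_diag _)
    dsimp only
    rw [h1]
    ext g
    simpa [MonoidHom.comp_apply] using DFunLike.congr_fun (extHom_diag φ) g
  right_inv ψ := by
    have h1 : extHom (((extHom ψ).comp e.toMonoidHom).comp (diag Γ))
        = (extHom ψ).comp e.toMonoidHom :=
      eq_of_comp_diag_eq _ _ (continuous_extHom _) ((continuous_extHom ψ).comp he)
        (extHom_diag _)
    dsimp only
    rw [h1]
    ext g
    simpa [MonoidHom.comp_apply] using DFunLike.congr_fun (extHom_diag ψ) g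

lemma card_addHom_eq (he : Continuous e) (he' : Continuous e.symm) (n : ℕ) (hn : n ≠ 0) :
    Nat.card (Additive (Abelianization Γ) →+ ZMod n)
      = Nat.card (Additive (Abelianization Δ) →+ ZMod n) := by
  haveI : NeZero n := ⟨hn⟩
  letI : TopologicalSpace (Multiplicative (ZMod n)) := ⊥
  haveI : DiscreteTopology (Multiplicative (ZMod n)) := ⟨rfl⟩
  apply Nat.card_congr
  exact (MonoidHom.toAdditiveLeft.symm.trans
    ((Abelianization.lift.symm.trans
      ((homEquivOfIso e he he' (Multiplicative (ZMod n))).trans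
        Abelianization.lift)).trans MonoidHom.toAdditiveLeft))

end ProfComp


open AddSubgroup in
lemma card_zmod_addHom (a b : ℕ) (hb : b ≠ 0) :
    Nat.card (ZMod a →+ ZMod b) = Nat.gcd a b := by
  haveI : NeZero b := ⟨hb⟩
  -- step 1: homs correspond to a-torsion points
  have E1 : {x : ZMod b // (a : ℤ) • x = 0} ≃ (ZMod a →+ ZMod b) :=
    ((zmultiplesHom (ZMod b)).subtypeEquiv (fun x => by
      simp [zmultiplesHom_apply])).trans (ZMod.lift a)
  -- step 2: torsion points = kernel of multiplication by a
  set f : ZMod b →+ ZMod b := AddMonoidHom.mulLeft (a : ZMod b) with hf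
  have E2 : {x : ZMod b // (a : ℤ) • x = 0} ≃ f.ker := by
    apply Equiv.subtypeEquivRight
    intro x
    simp [hf, AddMonoidHom.mem_ker, zsmul_eq_mul]
  -- step 3: range of f is the multiples of (a : ZMod b)
  have hrange : f.range = zmultiples ((a : ℕ) : ZMod b) := by
    ext x
    constructor
    · rintro ⟨y, rfl⟩
      refine ⟨(y.val : ℤ), ?_⟩
      show ((y.val : ℤ) • ((a : ℕ) : ZMod b)) = f y
      rw [zsmul_eq_mul]
      show ((y.val : ℤ) : ZMod b) * ((a:ℕ) : ZMod b) = (a : ZMod b) * y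
      push_cast
      rw [ZMod.natCast_val, ZMod.cast_id, mul_comm]
    · rintro ⟨n, hn⟩
      refine ⟨(n : ZMod b), ?_⟩
      rw [← hn]
      show (a : ZMod b) * (n : ZMod b) = (n • ((a : ℕ) : ZMod b))
      rw [zsmul_eq_mul, mul_comm]
  have hcardrange : Nat.card f.range = b / Nat.gcd b a := by
    rw [hrange, Nat.card_zmultiples, ZMod.addOrderOf_coe a hb]
  have hker : Nat.card (ZMod b) = Nat.card (ZMod b ⧸ f.ker) * Nat.card f.ker :=
    AddSubgroup.card_eq_card_quotient_mul_card_addSubgroup f.ker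
  rw [Nat.card_zmod, Nat.card_congr (QuotientAddGroup.quotientKerEquivRange f).toEquiv,
    hcardrange] at hker
  have hdvd : Nat.gcd b a ∣ b := Nat.gcd_dvd_left b a
  have hne : b / Nat.gcd b a ≠ 0 := by
    apply Nat.div_ne_zero_iff_of_dvd hdvd |>.mpr
    exact ⟨hb, Nat.gcd_ne_zero_left hb⟩
  have h2 : Nat.card f.ker = b / (b / Nat.gcd b a) := by
    exact (Nat.div_eq_of_eq_mul_right (Nat.pos_of_ne_zero hne) hker).symm
  calc Nat.card (ZMod a →+ ZMod b) = Nat.card f.ker := (Nat.card_congr (E1.symm.trans E2))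
    _ = b / (b / Nat.gcd b a) := h2
    _ = Nat.gcd b a := Nat.div_div_self hdvd hb
    _ = Nat.gcd a b := Nat.gcd_comm b a

/-- Homs out of a product. -/
def prodHomEquiv (P Q C : Type*) [AddCommMonoid P] [AddCommMonoid Q] [AddCommMonoid C] :
    ((P × Q) →+ C) ≃ (P →+ C) × (Q →+ C) where
  toFun f := (f.comp (AddMonoidHom.inl P Q), f.comp (AddMonoidHom.inr P Q))
  invFun g := g.1.coprod g.2
  left_inv f := by
    ext x
    show f (x.1, 0) + f (0, x.2) = f x
    rw [← map_add]
    simp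
  right_inv g := by
    refine Prod.ext ?_ ?_ <;> ext x <;> simp
lemma card_hom_canonical (r : ℕ) (ι : Type) [Fintype ι] (q : ι → ℕ) (n : ℕ) (hn : n ≠ 0) :
    Nat.card (((Fin r →₀ ℤ) × ⨁ i : ι, ZMod (q i)) →+ ZMod n)
      = n ^ r * ∏ i : ι, Nat.gcd (q i) n := by
  classical
  haveI : NeZero n := ⟨hn⟩
  have E : (((Fin r →₀ ℤ) × ⨁ i : ι, ZMod (q i)) →+ ZMod n)
      ≃ ((Fin r → ZMod n) × ∀ i : ι, (ZMod (q i) →+ ZMod n)) := by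
    refine (prodHomEquiv _ _ _).trans (Equiv.prodCongr ?_ ?_)
    · exact (Finsupp.liftAddHom (α := Fin r) (M := ℤ) (N := ZMod n)).symm.toEquiv.trans
        (Equiv.piCongrRight fun _ => (zmultiplesHom (ZMod n)).symm)
    · exact (DFinsupp.liftAddHom (β := fun i => ZMod (q i)) (γ := ZMod n)).symm.toEquiv
  rw [Nat.card_congr E, Nat.card_prod, Nat.card_fun, Nat.card_pi]
  congr 1
  · rw [Nat.card_zmod, Nat.card_eq_fintype_card (α := Fin r), Fintype.card_fin]
  · exact Finset.prod_congr rfl fun i _ => card_zmod_addHom (q i) n hn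

lemma gcd_pp_same (p e j : ℕ) : Nat.gcd (p ^ e) (p ^ j) = p ^ min e j := by
  rcases le_total e j with h | h
  · rw [Nat.gcd_eq_left (pow_dvd_pow p h), min_eq_left h]
  · rw [Nat.gcd_eq_right (pow_dvd_pow p h), min_eq_right h]

lemma gcd_pp_diff {p p' : ℕ} (hp : p.Prime) (hp' : p'.Prime) (hne : p' ≠ p) (e j : ℕ) :
    Nat.gcd (p' ^ e) (p ^ j) = 1 :=
  Nat.Coprime.pow e j ((Nat.coprime_primes hp' hp).mpr hne)

section Invariants

variable {ι₁ ι₂ : Type} [Fintype ι₁] [Fintype ι₂]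
  (r₁ r₂ : ℕ) (p₁ : ι₁ → ℕ) (e₁ : ι₁ → ℕ) (p₂ : ι₂ → ℕ) (e₂ : ι₂ → ℕ)

/-- A product of gcds with a power of `p` is a power of `p` with exponent a sum of mins. -/
lemma prod_gcd_pow {ι : Type} [Fintype ι] (p : ι → ℕ) (hp : ∀ i, (p i).Prime) (e : ι → ℕ)
    (P : ℕ) (hP : P.Prime) (j : ℕ) :
    ∏ i, Nat.gcd (p i ^ e i) (P ^ j) = P ^ (∑ i, if p i = P then min (e i) j else 0) := by
  rw [← Finset.prod_pow_eq_pow_sum]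
  refine Finset.prod_congr rfl fun i _ => ?_
  by_cases h : p i = P
  · rw [h, gcd_pp_same, if_pos rfl]
  · rw [gcd_pp_diff hP (hp i) h, if_neg h, pow_zero]

lemma invariants_eq (hp₁ : ∀ i, (p₁ i).Prime) (hp₂ : ∀ i, (p₂ i).Prime)
    (H : ∀ n : ℕ, n ≠ 0 →
      n ^ r₁ * ∏ i, Nat.gcd (p₁ i ^ e₁ i) n = n ^ r₂ * ∏ i, Nat.gcd (p₂ i ^ e₂ i) n) :
    r₁ = r₂ ∧ ∀ v : ℕ, 2 ≤ v →
      Fintype.card {i : ι₁ // p₁ i ^ e₁ i = v}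
        = Fintype.card {i₂ : ι₂ // p₂ i₂ ^ e₂ i₂ = v} := by
  classical
  -- rank equality
  have hr : r₁ = r₂ := by
    set B := ((Finset.univ.sup fun i => p₁ i ^ e₁ i) ⊔ (Finset.univ.sup fun i => p₂ i ^ e₂ i))
      with hB
    obtain ⟨P, hPle, hP⟩ := Nat.exists_infinite_primes (B + 1)
    have hgcd : ∀ (q : ℕ), 0 < q → q < P → Nat.gcd q P = 1 := by
      intro q hq hlt
      have : ¬ P ∣ q := fun hdvd => absurd (Nat.le_of_dvd hq hdvd) (not_le.mpr hlt)
      exact Nat.Coprime.gcd_eq_one (Nat.Coprime.symm ((Nat.Prime.coprime_iff_not_dvd hP).mpr this))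
    have h1 : ∏ i, Nat.gcd (p₁ i ^ e₁ i) P = 1 := by
      refine Finset.prod_eq_one fun i _ => hgcd _ (pow_pos (hp₁ i).pos _) ?_
      have hle : p₁ i ^ e₁ i ≤ B :=
        le_trans (Finset.le_sup (f := fun i => p₁ i ^ e₁ i) (Finset.mem_univ i))
          (le_max_left _ _)
      omega
    have h2 : ∏ i, Nat.gcd (p₂ i ^ e₂ i) P = 1 := by
      refine Finset.prod_eq_one fun i _ => hgcd _ (pow_pos (hp₂ i).pos _) ?_
      have hle : p₂ i ^ e₂ i ≤ B :=
        le_trans (Finset.le_sup (f := fun i => p₂ i ^ e₂ i) (Finset.mem_univ i))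
          (le_max_right _ _)
      omega
    have := H P hP.pos.ne'
    rw [h1, h2, mul_one, mul_one] at this
    exact Nat.pow_right_injective hP.two_le this
  subst hr
  refine ⟨rfl, ?_⟩
  -- sums of mins are equal
  have hS : ∀ P : ℕ, P.Prime → ∀ j : ℕ,
      (∑ i, if p₁ i = P then min (e₁ i) j else 0)
        = (∑ i, if p₂ i = P then min (e₂ i) j else 0) := by
    intro P hP j
    have hn : (P : ℕ) ^ j ≠ 0 := pow_ne_zero _ hP.pos.ne'
    have := H (P ^ j) hn
    rw [prod_gcd_pow p₁ hp₁ e₁ P hP j, prod_gcd_pow p₂ hp₂ e₂ P hP j] at this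
    have := mul_left_cancel₀ (pow_ne_zero r₁ hn) this
    exact Nat.pow_right_injective hP.two_le this
  -- counts of indices with exponent ≥ j are equal
  have hT : ∀ P : ℕ, P.Prime → ∀ j : ℕ,
      (∑ i, if p₁ i = P ∧ j + 1 ≤ e₁ i then 1 else 0)
        = (∑ i, if p₂ i = P ∧ j + 1 ≤ e₂ i then 1 else 0) := by
    intro P hP j
    have step1 : (∑ i, if p₁ i = P then min (e₁ i) (j+1) else 0)
        = (∑ i, if p₁ i = P then min (e₁ i) j else 0)
          + (∑ i, if p₁ i = P ∧ j + 1 ≤ e₁ i then 1 else 0) := by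
      rw [← Finset.sum_add_distrib]
      refine Finset.sum_congr rfl fun i _ => by split_ifs <;> omega
    have step2 : (∑ i, if p₂ i = P then min (e₂ i) (j+1) else 0)
        = (∑ i, if p₂ i = P then min (e₂ i) j else 0)
          + (∑ i, if p₂ i = P ∧ j + 1 ≤ e₂ i then 1 else 0) := by
      rw [← Finset.sum_add_distrib]
      refine Finset.sum_congr rfl fun i _ => by split_ifs <;> omega
    have a1 := hS P hP j
    have a2 := hS P hP (j+1)
    omega
  -- counts of indices with exponent = j are equal
  have hM : ∀ P : ℕ, P.Prime → ∀ j : ℕ, 1 ≤ j →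
      (∑ i, if p₁ i = P ∧ e₁ i = j then 1 else 0)
        = (∑ i, if p₂ i = P ∧ e₂ i = j then 1 else 0) := by
    intro P hP j hj
    obtain ⟨j, rfl⟩ := Nat.exists_eq_add_of_le hj
    have split1 : (∑ i, if p₁ i = P ∧ j + 1 ≤ e₁ i then 1 else 0)
        = (∑ i, if p₁ i = P ∧ e₁ i = 1 + j then 1 else 0)
          + (∑ i, if p₁ i = P ∧ (1 + j) + 1 ≤ e₁ i then 1 else 0) := by
      rw [← Finset.sum_add_distrib]
      refine Finset.sum_congr rfl fun i _ => by split_ifs <;> omega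
    have split2 : (∑ i, if p₂ i = P ∧ j + 1 ≤ e₂ i then 1 else 0)
        = (∑ i, if p₂ i = P ∧ e₂ i = 1 + j then 1 else 0)
          + (∑ i, if p₂ i = P ∧ (1 + j) + 1 ≤ e₂ i then 1 else 0) := by
      rw [← Finset.sum_add_distrib]
      refine Finset.sum_congr rfl fun i _ => by split_ifs <;> omega
    have a1 := hT P hP j
    have a2 := hT P hP (1 + j)
    omega
  -- fiber counts
  intro v hv
  have card_eq_sum₁ : ∀ (Q : ι₁ → Prop) [DecidablePred Q],
      Fintype.card {i // Q i} = ∑ i, if Q i then 1 else 0 := by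
    intro Q _
    rw [Fintype.card_subtype, Finset.card_filter]
  have card_eq_sum₂ : ∀ (Q : ι₂ → Prop) [DecidablePred Q],
      Fintype.card {i // Q i} = ∑ i, if Q i then 1 else 0 := by
    intro Q _
    rw [Fintype.card_subtype, Finset.card_filter]
  by_cases hrep : ∃ P j : ℕ, P.Prime ∧ 1 ≤ j ∧ v = P ^ j
  · obtain ⟨P, j, hP, hj, rfl⟩ := hrep
    have iff₁ : ∀ i : ι₁, (p₁ i ^ e₁ i = P ^ j) ↔ (p₁ i = P ∧ e₁ i = j) := by
      intro i
      constructor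
      · intro h
        have hdvd : P ∣ p₁ i ^ e₁ i := by
          rw [h]; exact dvd_pow_self P (by omega)
        have : P ∣ p₁ i := hP.dvd_of_dvd_pow hdvd
        have hpe : p₁ i = P := ((Nat.prime_dvd_prime_iff_eq hP (hp₁ i)).mp this).symm
        refine ⟨hpe, ?_⟩
        rw [hpe] at h
        exact Nat.pow_right_injective hP.two_le h
      · rintro ⟨h1, h2⟩; rw [h1, h2]
    have iff₂ : ∀ i : ι₂, (p₂ i ^ e₂ i = P ^ j) ↔ (p₂ i = P ∧ e₂ i = j) := by
      intro i
      constructor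
      · intro h
        have hdvd : P ∣ p₂ i ^ e₂ i := by
          rw [h]; exact dvd_pow_self P (by omega)
        have : P ∣ p₂ i := hP.dvd_of_dvd_pow hdvd
        have hpe : p₂ i = P := ((Nat.prime_dvd_prime_iff_eq hP (hp₂ i)).mp this).symm
        refine ⟨hpe, ?_⟩
        rw [hpe] at h
        exact Nat.pow_right_injective hP.two_le h
      · rintro ⟨h1, h2⟩; rw [h1, h2]
    rw [card_eq_sum₁, card_eq_sum₂]
    have A1 : (∑ i : ι₁, if p₁ i ^ e₁ i = P ^ j then 1 else 0)
        = ∑ i : ι₁, if p₁ i = P ∧ e₁ i = j then 1 else 0 :=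
      Finset.sum_congr rfl fun i _ => by rw [if_congr (iff₁ i) rfl rfl]
    have A2 : (∑ i : ι₂, if p₂ i ^ e₂ i = P ^ j then 1 else 0)
        = ∑ i : ι₂, if p₂ i = P ∧ e₂ i = j then 1 else 0 :=
      Finset.sum_congr rfl fun i _ => by rw [if_congr (iff₂ i) rfl rfl]
    rw [A1, A2]
    exact hM P hP j hj
  · have empty₁ : ∀ i : ι₁, p₁ i ^ e₁ i ≠ v := by
      intro i h
      rcases Nat.eq_zero_or_pos (e₁ i) with h0 | h0
      · rw [h0, pow_zero] at h; omega
      · exact hrep ⟨p₁ i, e₁ i, hp₁ i, h0, h.symm⟩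
    have empty₂ : ∀ i : ι₂, p₂ i ^ e₂ i ≠ v := by
      intro i h
      rcases Nat.eq_zero_or_pos (e₂ i) with h0 | h0
      · rw [h0, pow_zero] at h; omega
      · exact hrep ⟨p₂ i, e₂ i, hp₂ i, h0, h.symm⟩
    rw [Fintype.card_eq_zero_iff.mpr ⟨fun x => empty₁ x.1 x.2⟩,
      Fintype.card_eq_zero_iff.mpr ⟨fun x => empty₂ x.1 x.2⟩]

end Invariants

lemma exists_equiv_of_fiber_cards {ι₁ ι₂ : Type} [Fintype ι₁] [Fintype ι₂]
    (f : ι₁ → ℕ) (g : ι₂ → ℕ)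
    (h : ∀ v, Fintype.card {i // f i = v} = Fintype.card {i // g i = v}) :
    ∃ σ : ι₁ ≃ ι₂, ∀ i, g (σ i) = f i := by
  classical
  let E : ∀ v : ℕ, {i // f i = v} ≃ {i // g i = v} := fun v => Fintype.equivOfCardEq (h v)
  refine ⟨(Equiv.sigmaFiberEquiv f).symm.trans
    ((Equiv.sigmaCongrRight E).trans (Equiv.sigmaFiberEquiv g)), fun i => ?_⟩
  have h1 : (Equiv.sigmaFiberEquiv f).symm i = ⟨f i, ⟨i, rfl⟩⟩ := by
    apply (Equiv.sigmaFiberEquiv f).injective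
    simp
  simp only [Equiv.trans_apply, h1, Equiv.sigmaCongrRight_apply, Equiv.sigmaFiberEquiv]
  exact (E (f i) ⟨i, rfl⟩).2

section Strip
variable {ι : Type} [DecidableEq ι] (β : ι → Type*) [∀ i, AddCommMonoid (β i)]
  (P : ι → Prop) [DecidablePred P]

/-- Dropping subsingleton components from a direct sum. -/
noncomputable def stripEquiv (hP : ∀ i, ¬ P i → Subsingleton (β i)) :
    (⨁ i : {i // P i}, β i.1) ≃+ ⨁ i, β i where
  toFun := DirectSum.toAddMonoid fun i => DirectSum.of β i.1
  invFun := DirectSum.toAddMonoid fun i =>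
    if h : P i then DirectSum.of (fun j : {i // P i} => β j.1) ⟨i, h⟩ else 0
  left_inv x := by
    induction x using DirectSum.induction_on with
    | zero => simp
    | of i x =>
      rw [DirectSum.toAddMonoid_of, DirectSum.toAddMonoid_of, dif_pos i.prop]
    | add x y hx hy => rw [map_add, map_add, hx, hy]
  right_inv x := by
    induction x using DirectSum.induction_on with
    | zero => simp
    | of i x =>
      rw [DirectSum.toAddMonoid_of]
      split_ifs with h
      · rw [DirectSum.toAddMonoid_of]
      · haveI := hP i h
        rw [Subsingleton.elim x 0]
        simp
    | add x y hx hy => rw [map_add, map_add, hx, hy]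
  map_add' := map_add _

end Strip

/-- Componentwise congruence for `ZMod`. -/
def zmodCongr {a b : ℕ} (h : a = b) : ZMod a ≃+ ZMod b := h ▸ AddEquiv.refl _

def homPrecompEquiv {A A' : Type*} [AddZeroClass A] [AddZeroClass A'] (f : A ≃+ A')
    (C : Type*) [AddCommMonoid C] : (A →+ C) ≃ (A' →+ C) where
  toFun g := g.comp f.symm.toAddMonoidHom
  invFun g := g.comp f.toAddMonoidHom
  left_inv g := by ext x; simp
  right_inv g := by ext x; simp
theorem addEquiv_of_card_addHom_eq {A B : Type*} [AddCommGroup A] [AddCommGroup B]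
    [AddGroup.FG A] [AddGroup.FG B]
    (h : ∀ n : ℕ, n ≠ 0 → Nat.card (A →+ ZMod n) = Nat.card (B →+ ZMod n)) :
    Nonempty (A ≃+ B) := by
  classical
  obtain ⟨r₁, ι₁, _, p₁, hp₁, e₁, ⟨f₁⟩⟩ := AddCommGroup.equiv_free_prod_directSum_zmod A
  obtain ⟨r₂, ι₂, _, p₂, hp₂, e₂, ⟨f₂⟩⟩ := AddCommGroup.equiv_free_prod_directSum_zmod B
  set q₁ : ι₁ → ℕ := fun i => p₁ i ^ e₁ i with hq₁
  set q₂ : ι₂ → ℕ := fun i => p₂ i ^ e₂ i with hq₂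
  have hcount : ∀ n : ℕ, n ≠ 0 →
      n ^ r₁ * ∏ i, Nat.gcd (p₁ i ^ e₁ i) n = n ^ r₂ * ∏ i, Nat.gcd (p₂ i ^ e₂ i) n := by
    intro n hn
    calc n ^ r₁ * ∏ i, Nat.gcd (p₁ i ^ e₁ i) n
        = Nat.card (((Fin r₁ →₀ ℤ) × ⨁ i : ι₁, ZMod (q₁ i)) →+ ZMod n) :=
          (card_hom_canonical r₁ ι₁ q₁ n hn).symm
      _ = Nat.card (A →+ ZMod n) := (Nat.card_congr (homPrecompEquiv f₁ (ZMod n))).symm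
      _ = Nat.card (B →+ ZMod n) := h n hn
      _ = Nat.card (((Fin r₂ →₀ ℤ) × ⨁ i : ι₂, ZMod (q₂ i)) →+ ZMod n) :=
          Nat.card_congr (homPrecompEquiv f₂ (ZMod n))
      _ = n ^ r₂ * ∏ i, Nat.gcd (p₂ i ^ e₂ i) n := card_hom_canonical r₂ ι₂ q₂ n hn
  obtain ⟨hr, hfib⟩ := invariants_eq r₁ r₂ p₁ e₁ p₂ e₂ hp₁ hp₂ hcount
  subst hr
  have hq₁pos : ∀ i, q₁ i ≠ 0 := fun i => pow_ne_zero _ (hp₁ i).pos.ne'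
  have hq₂pos : ∀ i, q₂ i ≠ 0 := fun i => pow_ne_zero _ (hp₂ i).pos.ne'
  -- fiber counts on the subtypes of nontrivial components
  have hfib' : ∀ v : ℕ,
      Fintype.card {x : {i : ι₁ // q₁ i ≠ 1} // q₁ x.1 = v}
        = Fintype.card {x : {i : ι₂ // q₂ i ≠ 1} // q₂ x.1 = v} := by
    intro v
    rcases Nat.lt_or_ge v 2 with hv | hv
    · have hempty₁ : IsEmpty {x : {i : ι₁ // q₁ i ≠ 1} // q₁ x.1 = v} := by
        refine ⟨fun x => ?_⟩
        have := x.1.2; have := x.2; have := hq₁pos x.1.1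
        omega
      have hempty₂ : IsEmpty {x : {i : ι₂ // q₂ i ≠ 1} // q₂ x.1 = v} := by
        refine ⟨fun x => ?_⟩
        have := x.1.2; have := x.2; have := hq₂pos x.1.1
        omega
      rw [Fintype.card_eq_zero_iff.mpr hempty₁, Fintype.card_eq_zero_iff.mpr hempty₂]
    · have E1 : {x : {i : ι₁ // q₁ i ≠ 1} // q₁ x.1 = v} ≃ {i : ι₁ // q₁ i = v} :=
        ⟨fun x => ⟨x.1.1, x.2⟩, fun i => ⟨⟨i.1, fun hc => by omega⟩, i.2⟩,
          fun x => by ext; rfl, fun i => rfl⟩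
      have E2 : {x : {i : ι₂ // q₂ i ≠ 1} // q₂ x.1 = v} ≃ {i : ι₂ // q₂ i = v} :=
        ⟨fun x => ⟨x.1.1, x.2⟩, fun i => ⟨⟨i.1, fun hc => by omega⟩, i.2⟩,
          fun x => by ext; rfl, fun i => rfl⟩
      rw [Fintype.card_congr E1, Fintype.card_congr E2]
      exact hfib v hv
  obtain ⟨σ, hσ⟩ := exists_equiv_of_fiber_cards _ _ hfib'
  -- build the equivalence
  have hsub₁ : ∀ i : ι₁, ¬ (q₁ i ≠ 1) → Subsingleton (ZMod (q₁ i)) := by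
    intro i hi
    have h1 : q₁ i = 1 := not_not.mp hi
    rw [h1]
    infer_instance
  have hsub₂ : ∀ i : ι₂, ¬ (q₂ i ≠ 1) → Subsingleton (ZMod (q₂ i)) := by
    intro i hi
    have h1 : q₂ i = 1 := not_not.mp hi
    rw [h1]
    infer_instance
  have Etor : (⨁ i : ι₁, ZMod (q₁ i)) ≃+ ⨁ i : ι₂, ZMod (q₂ i) := by
    refine ((stripEquiv _ _ hsub₁).symm.trans ?_).trans (stripEquiv _ _ hsub₂)
    refine (DirectSum.equivCongrLeft σ).trans ?_
    exact DFinsupp.mapRange.addEquiv fun y =>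
      zmodCongr (by rw [← hσ (σ.symm y), Equiv.apply_symm_apply])
  exact ⟨(f₁.trans ((AddEquiv.refl _).prodCongr Etor)).trans f₂.symm⟩

theorem profinite_iso_implies_abelianization_iso
    (Γ Δ : Type*) [Group Γ] [Group Δ] (hΓ : Group.FG Γ) (hΔ : Group.FG Δ)
    (e : ↥(profiniteCompletion Γ) ≃* ↥(profiniteCompletion Δ))
    (he : Continuous e) (he' : Continuous e.symm) :
    Nonempty (Abelianization Γ ≃* Abelianization Δ) := by
  haveI := hΓ
  haveI := hΔ
  have hofΓ : Function.Surjective (Abelianization.of : Γ → Abelianization Γ) :=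
    fun x => Quotient.inductionOn x fun g => ⟨g, rfl⟩
  have hofΔ : Function.Surjective (Abelianization.of : Δ → Abelianization Δ) :=
    fun x => Quotient.inductionOn x fun g => ⟨g, rfl⟩
  haveI : Group.FG (Abelianization Γ) := Group.fg_of_surjective hofΓ
  haveI : Group.FG (Abelianization Δ) := Group.fg_of_surjective hofΔ
  obtain ⟨E⟩ := addEquiv_of_card_addHom_eq
    (A := Additive (Abelianization Γ)) (B := Additive (Abelianization Δ))
    (fun n hn => ProfComp.card_addHom_eq e he he' n hn)
  exact ⟨MulEquiv.toAdditive.symm E⟩
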